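/- Let E and F be Banach lattices with projection bands B ⊆ E (with band projection P) and C ⊆ F (with band projection Q) such that B ⊗̂ C is a projection band in E ⊗̂ F with band projection S. Then S agrees with the lattice homomorphism P ⊗ Q determined by (P⊗Q)(x⊗y) = P(x) ⊗ Q(y) on E ⊗ F; in particular, for x ∈ E and y ∈ F, the band-component of x ⊗ y in B ⊗̂ C equals P(x) ⊗ Q(y). -/

import Mathlib

open Filter Topology

/-- The sublattice-submodule of `G` generated by a set `s`. -/
def latticeSpan {G : Type*} [Lattice G] [AddCommGroup G] [Module ℝ G] (s : Set G) : Set G :=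
  {x | ∀ p : Submodule ℝ G, s ⊆ p → (∀ a ∈ (p : Set G), ∀ b ∈ (p : Set G), a ⊔ b ∈ p) → x ∈ p}

/-- `t` realizes the Banach lattice `G` as the Fremlin projective tensor
product `E ⊗̂ F`: a bilinear lattice bimorphism whose norm is the (cross)
Fremlin projective norm and whose image spans a dense subspace, satisfying
Fremlin's lattice estimate. -/
structure IsFremlinProjTensor (E F G : Type*)
    [NormedAddCommGroup E] [Lattice E] [HasSolidNorm E] [IsOrderedAddMonoid E] [NormedSpace ℝ E]
    [NormedAddCommGroup F] [Lattice F] [HasSolidNorm F] [IsOrderedAddMonoid F] [NormedSpace ℝ F]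
    [NormedAddCommGroup G] [Lattice G] [HasSolidNorm G] [IsOrderedAddMonoid G] [NormedSpace ℝ G] [CompleteSpace G]
    (t : E →ₗ[ℝ] F →ₗ[ℝ] G) : Prop where
  abs_tensor : ∀ x y, |t x y| = t |x| |y|
  pos_pos : ∀ x y, 0 < x → 0 < y → 0 < t x y
  inf_tensor_le : ∀ x₀ x₁ y₀ y₁, 0 ≤ x₀ → 0 ≤ x₁ → 0 ≤ y₀ → 0 ≤ y₁ →
    (t x₀ y₀ ⊓ t x₁ y₁) ≤ t (x₀ ⊓ x₁) (y₀ ⊔ y₁)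
  cross_norm : ∀ x y, ‖t x y‖ = ‖x‖ * ‖y‖
  dense_span : Dense (Submodule.span ℝ (Set.image2 (fun x y => t x y) Set.univ Set.univ) : Set G)

/-- `u` is a quasi-interior point of the Banach lattice `G`: `u ≥ 0` and for
every `x ≥ 0`, `x ⊓ n•u → x` in norm (equivalently, the ideal generated by `u`
is norm dense). -/
def QuasiInteriorPoint {G : Type*} [NormedAddCommGroup G] [Lattice G] [HasSolidNorm G] [IsOrderedAddMonoid G] (u : G) : Prop :=
  0 ≤ u ∧ ∀ x : G, 0 ≤ x → Tendsto (fun n : ℕ => x ⊓ n • u) atTop (nhds x)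

/-- `P` is a band projection on the vector lattice `G`. -/
structure IsBandProjection {G : Type*} [Lattice G] [AddCommGroup G] [Module ℝ G]
    (P : G →ₗ[ℝ] G) : Prop where
  idem : ∀ x, P (P x) = P x
  pos : ∀ x, 0 ≤ x → 0 ≤ P x
  proj_le : ∀ x, 0 ≤ x → P x ≤ x
  disj : ∀ x, |P x| ⊓ |x - P x| = 0


section Helpers

variable {G : Type*} [NormedAddCommGroup G] [Lattice G] [HasSolidNorm G] [IsOrderedAddMonoid G]

private lemma aux_inf_add_le {a b c : G} (ha : 0 ≤ a) (hb : 0 ≤ b) (hc : 0 ≤ c) :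
    (a + b) ⊓ c ≤ a ⊓ c + b ⊓ c := by
  have key : a ⊓ c + b ⊓ c = ((a + b) ⊓ (a + c)) ⊓ ((c + b) ⊓ (c + c)) := by
    rw [inf_add a c (b ⊓ c), add_inf b c a, add_inf b c c]
  rw [key]
  refine le_inf (le_inf inf_le_left ?_) (le_inf ?_ ?_)
  · exact inf_le_right.trans (le_add_of_nonneg_left ha)
  · exact inf_le_right.trans (le_add_of_nonneg_right hb)
  · exact inf_le_right.trans (le_add_of_nonneg_left hc)

private lemma aux_nsmul_inf_eq_zero {a g : G} (ha : 0 ≤ a) (hg : 0 ≤ g)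
    (h : a ⊓ g = 0) : ∀ n : ℕ, (n • a) ⊓ g = 0 := by
  intro n
  induction n with
  | zero => simpa using inf_eq_left.mpr hg
  | succ n ih =>
      refine le_antisymm ?_ (le_inf (nsmul_nonneg ha _) hg)
      calc ((n + 1) • a) ⊓ g = (n • a + a) ⊓ g := by rw [succ_nsmul]
        _ ≤ (n • a) ⊓ g + a ⊓ g := aux_inf_add_le (nsmul_nonneg ha n) ha hg
        _ = 0 := by rw [ih, h, add_zero]

private lemma aux_semiclosed {v : G} {n : ℕ} (hn : 0 < n) (h : 0 ≤ n • v) : 0 ≤ v := by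
  have hd : (n • v⁺) ⊓ v⁻ = 0 :=
    aux_nsmul_inf_eq_zero (posPart_nonneg v) (negPart_nonneg v)
      (posPart_inf_negPart_eq_zero v) n
  have h1 : n • v⁻ ≤ n • v⁺ := by
    refine sub_nonneg.mp ?_
    have heq : n • v⁺ - n • v⁻ = n • v := by rw [← nsmul_sub, posPart_sub_negPart]
    rw [heq]; exact h
  have h3 : v⁻ ≤ n • v⁻ := by
    obtain ⟨m, rfl⟩ := Nat.exists_eq_succ_of_ne_zero hn.ne'
    rw [succ_nsmul]
    exact le_add_of_nonneg_left (nsmul_nonneg (negPart_nonneg v) m)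
  have h5 : v⁻ = 0 := by
    have := inf_eq_right.mpr (h3.trans h1)
    rw [this] at hd; exact hd
  exact negPart_eq_zero.mp h5

variable [NormedSpace ℝ G]

private lemma aux_real_smul_nonneg : ∀ {r : ℝ}, 0 ≤ r → ∀ {w : G}, 0 ≤ w → 0 ≤ r • w := by
  have hrat : ∀ (q : ℚ), 0 ≤ q → ∀ {w : G}, 0 ≤ w → 0 ≤ (q : ℝ) • w := by
    intro q hq w hw
    have hden : 0 < q.den := q.pos
    apply aux_semiclosed hden
    have key : (q.den : ℕ) • ((q : ℝ) • w) = (q.num.toNat) • w := by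
      rw [← Nat.cast_smul_eq_nsmul ℝ, ← Nat.cast_smul_eq_nsmul ℝ, smul_smul]
      congr 1
      have h1 : ((q.den : ℚ) * q) = (q.num : ℚ) := by exact_mod_cast Rat.den_mul_eq_num q
      have h2 : (q.num.toNat : ℤ) = q.num := Int.toNat_of_nonneg (Rat.num_nonneg.mpr hq)
      have h3 : ((q.den : ℝ) * (q : ℝ)) = ((q.num : ℤ) : ℝ) := by exact_mod_cast h1
      rw [h3]
      exact_mod_cast h2.symm
    rw [key]
    exact nsmul_nonneg hw _
  intro r hr w hw
  have hseq : ∀ n : ℕ, ∃ q : ℚ, r < (q : ℝ) ∧ (q : ℝ) < r + 1 / (n + 1) := by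
    intro n
    exact exists_rat_btwn (lt_add_of_pos_right r (by positivity))
  choose q hq1 hq2 using hseq
  have htend : Tendsto (fun n : ℕ => ((q n : ℝ))) atTop (nhds r) := by
    have h0 : Tendsto (fun n : ℕ => r + 1 / (n + 1)) atTop (nhds r) := by
      have : Tendsto (fun n : ℕ => 1 / ((n : ℝ) + 1)) atTop (𝓝 0) :=
        tendsto_one_div_add_atTop_nhds_zero_nat
      simpa using (tendsto_const_nhds (x := r)).add this
    exact tendsto_of_tendsto_of_tendsto_of_le_of_le (tendsto_const_nhds)
      h0 (fun n => (hq1 n).le) (fun n => (hq2 n).le)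
  have hsm : Tendsto (fun n : ℕ => ((q n : ℝ)) • w) atTop (nhds (r • w)) :=
    htend.smul tendsto_const_nhds
  refine ge_of_tendsto' hsm fun n => ?_
  have : (0 : ℚ) ≤ q n := by exact_mod_cast (hr.trans (hq1 n).le)
  exact hrat (q n) this hw

private lemma aux_smul_mono {r : ℝ} (hr : 0 ≤ r) {a b : G} (h : a ≤ b) : r • a ≤ r • b := by
  refine sub_nonneg.mp ?_
  rw [← smul_sub]
  exact aux_real_smul_nonneg hr (sub_nonneg.mpr h)

private lemma aux_abs_smul_le (r : ℝ) (w : G) : |r • w| ≤ |r| • |w| := by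
  rcases le_or_gt 0 r with hr | hr
  · rw [abs_of_nonneg hr]
    refine abs_le'.mpr ⟨aux_smul_mono hr (le_abs_self w), ?_⟩
    rw [← smul_neg]
    exact aux_smul_mono hr (neg_le_abs w)
  · have hrr : (0 : ℝ) ≤ -r := by linarith
    have h1 : r • w = (-r) • (-w) := by rw [neg_smul, smul_neg, neg_neg]
    rw [h1, abs_of_neg hr]
    refine abs_le'.mpr ⟨?_, ?_⟩
    · have : -w ≤ |w| := neg_le_abs w
      exact aux_smul_mono hrr this
    · rw [← smul_neg, neg_neg]
      exact aux_smul_mono hrr (le_abs_self w)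

private lemma aux_two_smul_inf (a b : G) : (2 : ℝ) • (a ⊓ b) = a + b - |a - b| := by
  have h1 := inf_add_sup a b
  have h2 := sup_sub_inf_eq_abs_sub a b
  rw [two_smul, abs_sub_comm]
  rw [← h1, ← h2]
  abel

end Helpers
section BP

variable {E : Type*} [NormedAddCommGroup E] [Lattice E] [HasSolidNorm E] [IsOrderedAddMonoid E] [NormedSpace ℝ E]

private lemma aux_bp_mono {P : E →ₗ[ℝ] E} (hP : IsBandProjection P) {a b : E} (h : a ≤ b) :
    P a ≤ P b := by
  refine sub_nonneg.mp ?_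
  rw [← map_sub]
  exact hP.pos _ (sub_nonneg.mpr h)

private lemma aux_bp_disj {P : E →ₗ[ℝ] E} (hP : IsBandProjection P) (e f : E) :
    |P e| ⊓ |f - P f| = 0 := by
  set z := |e| + |f| with hz
  have hz0 : 0 ≤ z := add_nonneg (abs_nonneg e) (abs_nonneg f)
  have h1 : |P e| ≤ P z := by
    have hpa : P e ≤ P |e| := aux_bp_mono hP (le_abs_self e)
    have hpb : -(P e) ≤ P |e| := by
      rw [← map_neg]
      exact aux_bp_mono hP (neg_le_abs e)
    exact (abs_le'.mpr ⟨hpa, hpb⟩).trans (aux_bp_mono hP (le_add_of_nonneg_right (abs_nonneg f)))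
  have h2 : |f - P f| ≤ z - P z := by
    have hfp : 0 ≤ f⁺ - P f⁺ := sub_nonneg.mpr (hP.proj_le _ (posPart_nonneg f))
    have hfn : 0 ≤ f⁻ - P f⁻ := sub_nonneg.mpr (hP.proj_le _ (negPart_nonneg f))
    have hdec : f - P f = (f⁺ - P f⁺) - (f⁻ - P f⁻) := by
      conv_lhs => rw [← posPart_sub_negPart f]
      rw [map_sub]
      abel
    have habs : |f - P f| ≤ (f⁺ - P f⁺) + (f⁻ - P f⁻) := by
      rw [hdec]
      refine abs_le'.mpr ⟨?_, ?_⟩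
      · exact (sub_le_self _ hfn).trans (le_add_of_nonneg_right hfn)
      · rw [neg_sub]
        exact (sub_le_self _ hfp).trans (le_add_of_nonneg_left hfp)
    have heq : (f⁺ - P f⁺) + (f⁻ - P f⁻) = |f| - P |f| := by
      conv_rhs => rw [← posPart_add_negPart f]
      rw [map_add]
      abel
    have hmono : |f| - P |f| ≤ z - P z := by
      have hk : P z - P |f| ≤ z - |f| := by
        have := hP.proj_le (z - |f|)
          (sub_nonneg.mpr (by rw [hz]; exact le_add_of_nonneg_left (abs_nonneg e)))
        rwa [map_sub] at this
      rw [sub_le_sub_iff] at hk ⊢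
      calc |f| + P z = P z + |f| := add_comm _ _
        _ ≤ z + P |f| := hk
    calc |f - P f| ≤ (f⁺ - P f⁺) + (f⁻ - P f⁻) := habs
      _ = |f| - P |f| := heq
      _ ≤ z - P z := hmono
  have h3 : |P e| ⊓ |f - P f| ≤ |P z| ⊓ |z - P z| := by
    refine inf_le_inf ?_ ?_
    · rw [abs_of_nonneg (hP.pos z hz0)]; exact h1
    · rw [abs_of_nonneg (sub_nonneg.mpr (hP.proj_le z hz0))]; exact h2
  exact le_antisymm (h3.trans_eq (hP.disj z)) (le_inf (abs_nonneg _) (abs_nonneg _))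

end BP

section Tensor

variable {E F G : Type*}
    [NormedAddCommGroup E] [Lattice E] [HasSolidNorm E] [IsOrderedAddMonoid E] [NormedSpace ℝ E]
    [NormedAddCommGroup F] [Lattice F] [HasSolidNorm F] [IsOrderedAddMonoid F] [NormedSpace ℝ F]
    [NormedAddCommGroup G] [Lattice G] [HasSolidNorm G] [IsOrderedAddMonoid G] [NormedSpace ℝ G] [CompleteSpace G]
    {t : E →ₗ[ℝ] F →ₗ[ℝ] G} (ht : IsFremlinProjTensor E F G t)

include ht

private lemma aux_tpos {x : E} {y : F} (hx : 0 ≤ x) (hy : 0 ≤ y) : 0 ≤ t x y := by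
  have h := ht.abs_tensor x y
  rw [abs_of_nonneg hx, abs_of_nonneg hy] at h
  rw [← h]
  exact abs_nonneg _

private lemma aux_tmono1 {a₁ a₂ : E} {b : F} (hb : 0 ≤ b) (h : a₁ ≤ a₂) :
    t a₁ b ≤ t a₂ b := by
  refine sub_nonneg.mp ?_
  have e : t a₂ b - t a₁ b = t (a₂ - a₁) b := by rw [map_sub, LinearMap.sub_apply]
  rw [e]
  exact aux_tpos ht (sub_nonneg.mpr h) hb

private lemma aux_tinf2 {x : E} (hx : 0 ≤ x) (a b : F) :
    t x (a ⊓ b) = t x a ⊓ t x b := by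
  have habs : t x |a - b| = |t x a - t x b| := by
    have h := ht.abs_tensor x (a - b)
    rw [abs_of_nonneg hx] at h
    rw [← h, map_sub]
  have e1 : (2 : ℝ) • (t x (a ⊓ b)) = (2 : ℝ) • (t x a ⊓ t x b) := by
    calc (2 : ℝ) • (t x (a ⊓ b)) = t x ((2 : ℝ) • (a ⊓ b)) := (map_smul (t x) _ _).symm
      _ = t x (a + b - |a - b|) := by rw [aux_two_smul_inf]
      _ = t x a + t x b - t x |a - b| := by rw [map_sub, map_add]
      _ = t x a + t x b - |t x a - t x b| := by rw [habs]
      _ = (2 : ℝ) • (t x a ⊓ t x b) := (aux_two_smul_inf _ _).symm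
  have := congrArg (fun z => (2 : ℝ)⁻¹ • z) e1
  simpa [inv_smul_smul₀ (two_ne_zero (α := ℝ))] using this

private lemma aux_tensor_disj₂ {a p : E} {b q : F}
    (ha : 0 ≤ a) (hp : 0 ≤ p) (hb : 0 ≤ b) (hq : 0 ≤ q) (hdisj : b ⊓ q = 0) :
    (t a b) ⊓ (t p q) = 0 := by
  have hc : 0 ≤ a ⊓ p := le_inf ha hp
  set m := t a b ⊓ t p q with hm
  have hm0 : 0 ≤ m := le_inf (aux_tpos ht ha hb) (aux_tpos ht hp hq)
  have hm1 : m ≤ t (a ⊓ p) b + t (a ⊓ p) q := by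
    have h := ht.inf_tensor_le a p b q ha hp hb hq
    have hsup : b ⊔ q = b + q := by
      have h2 := inf_add_sup b q
      rw [hdisj, zero_add] at h2; exact h2
    rw [hsup, map_add] at h
    exact h
  have hmu : m ⊓ t (a ⊓ p) b = 0 := by
    refine le_antisymm ?_ (le_inf hm0 (aux_tpos ht hc hb))
    have e1 : m ⊓ t (a ⊓ p) b ≤ t p b := inf_le_right.trans (aux_tmono1 ht hb inf_le_right)
    have e2 : m ⊓ t (a ⊓ p) b ≤ t p q := inf_le_left.trans inf_le_right
    calc m ⊓ t (a ⊓ p) b ≤ t p b ⊓ t p q := le_inf e1 e2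
      _ = t p (b ⊓ q) := (aux_tinf2 ht hp b q).symm
      _ = 0 := by rw [hdisj, map_zero]
  have hm2 : m ≤ t (a ⊓ p) q := by
    have huv : 0 ≤ t (a ⊓ p) b := aux_tpos ht hc hb
    have hv : 0 ≤ t (a ⊓ p) q := aux_tpos ht hc hq
    calc m = (t (a ⊓ p) b + t (a ⊓ p) q) ⊓ m := by
          rw [inf_comm]; exact (inf_eq_left.mpr hm1).symm
      _ ≤ t (a ⊓ p) b ⊓ m + t (a ⊓ p) q ⊓ m := aux_inf_add_le huv hv hm0
      _ = t (a ⊓ p) q ⊓ m := by rw [inf_comm (t (a ⊓ p) b) m, hmu, zero_add]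
      _ ≤ t (a ⊓ p) q := inf_le_left
  refine le_antisymm ?_ hm0
  calc m ≤ t a b ⊓ t a q := le_inf inf_le_left (hm2.trans (aux_tmono1 ht hq inf_le_left))
    _ = t a (b ⊓ q) := (aux_tinf2 ht ha b q).symm
    _ = 0 := by rw [hdisj, map_zero]

end Tensor
/-- if `B ⊆ E`, `C ⊆ F` are projection bands with band
projections `P`, `Q`, and `B ⊗̂ C` (the closed sublattice of `E ⊗̂ F` generated
by `B ⊗ C`) is a projection band in `E ⊗̂ F` with band projection `S`, then `S`
agrees with `P ⊗ Q` on elementary tensors: the band-component of `x ⊗ y` in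
`B ⊗̂ C` is `P(x) ⊗ Q(y)`. -/
theorem bandProjection_tensor
    {E F G : Type*}
    [NormedAddCommGroup E] [Lattice E] [HasSolidNorm E] [IsOrderedAddMonoid E] [NormedSpace ℝ E] [CompleteSpace E]
    [NormedAddCommGroup F] [Lattice F] [HasSolidNorm F] [IsOrderedAddMonoid F] [NormedSpace ℝ F] [CompleteSpace F]
    [NormedAddCommGroup G] [Lattice G] [HasSolidNorm G] [IsOrderedAddMonoid G] [NormedSpace ℝ G] [CompleteSpace G]
    (t : E →ₗ[ℝ] F →ₗ[ℝ] G) (ht : IsFremlinProjTensor E F G t)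
    (P : E →ₗ[ℝ] E) (hP : IsBandProjection P)
    (Q : F →ₗ[ℝ] F) (hQ : IsBandProjection Q)
    (S : G →ₗ[ℝ] G) (hS : IsBandProjection S)
    (hrange : Set.range S =
      closure (latticeSpan (Set.image2 (fun x y => t x y) (Set.range P) (Set.range Q)))) :
    ∀ (x : E) (y : F), S (t x y) = t (P x) (Q y) := by
  set D := Set.image2 (fun x y => t x y) (Set.range P) (Set.range Q) with hD
  -- the kill lemma: anything ≥ 0 disjoint from all generators is sent to 0 by S
  have kill : ∀ g : G, 0 ≤ g → (∀ (e : E) (f : F), (t |P e| |Q f|) ⊓ g = 0) → S g = 0 := by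
    intro g hg hdisj
    let K : Submodule ℝ G :=
      { carrier := {w | |w| ⊓ g = 0}
        zero_mem' := by
          simp only [Set.mem_setOf_eq, abs_zero]
          exact inf_eq_left.mpr hg
        add_mem' := by
          intro w₁ w₂ h1 h2
          simp only [Set.mem_setOf_eq] at h1 h2 ⊢
          refine le_antisymm ?_ (le_inf (abs_nonneg _) hg)
          calc |w₁ + w₂| ⊓ g ≤ (|w₁| + |w₂|) ⊓ g := inf_le_inf_right g (abs_add_le w₁ w₂)
            _ ≤ |w₁| ⊓ g + |w₂| ⊓ g := aux_inf_add_le (abs_nonneg _) (abs_nonneg _) hg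
            _ = 0 := by rw [h1, h2, add_zero]
        smul_mem' := by
          intro r w h
          simp only [Set.mem_setOf_eq] at h ⊢
          refine le_antisymm ?_ (le_inf (abs_nonneg _) hg)
          have hle : |r • w| ≤ (⌈|r|⌉₊ : ℕ) • |w| := by
            refine (aux_abs_smul_le r w).trans ?_
            rw [← Nat.cast_smul_eq_nsmul ℝ]
            refine sub_nonneg.mp ?_
            rw [← sub_smul]
            exact aux_real_smul_nonneg (sub_nonneg.mpr (Nat.le_ceil |r|)) (abs_nonneg w)
          calc |r • w| ⊓ g ≤ ((⌈|r|⌉₊ : ℕ) • |w|) ⊓ g := inf_le_inf_right g hle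
            _ = 0 := aux_nsmul_inf_eq_zero (abs_nonneg w) hg h _ }
    have hKsup : ∀ a ∈ (K : Set G), ∀ b ∈ (K : Set G), a ⊔ b ∈ K := by
      intro a ha b hb
      have ha' : |a| ⊓ g = 0 := ha
      have hb' : |b| ⊓ g = 0 := hb
      show |a ⊔ b| ⊓ g = 0
      have habs : |a ⊔ b| ≤ |a| + |b| := by
        refine abs_le'.mpr ⟨?_, ?_⟩
        · exact sup_le ((le_abs_self a).trans (le_add_of_nonneg_right (abs_nonneg b)))
            ((le_abs_self b).trans (le_add_of_nonneg_left (abs_nonneg a)))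
        · have h1 : -(a ⊔ b) ≤ -a := neg_le_neg le_sup_left
          exact h1.trans ((neg_le_abs a).trans (le_add_of_nonneg_right (abs_nonneg b)))
      refine le_antisymm ?_ (le_inf (abs_nonneg _) hg)
      calc |a ⊔ b| ⊓ g ≤ (|a| + |b|) ⊓ g := inf_le_inf_right g habs
        _ ≤ |a| ⊓ g + |b| ⊓ g := aux_inf_add_le (abs_nonneg _) (abs_nonneg _) hg
        _ = 0 := by rw [ha', hb', add_zero]
    have hKclosed : IsClosed (K : Set G) := by
      have hcont : Continuous fun w : G => |w| ⊓ g := by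
        have h1 : Continuous fun w : G => |w| := by
          have h2 := (continuous_posPart.add continuous_negPart :
            Continuous fun w : G => w⁺ + w⁻)
          exact h2.congr (fun w => posPart_add_negPart w)
        exact h1.inf continuous_const
      have hKeq : (K : Set G) = (fun w : G => |w| ⊓ g) ⁻¹' {0} := by
        ext w; simp [K, Set.mem_preimage]
      rw [hKeq]
      exact isClosed_singleton.preimage hcont
    have hDK : D ⊆ (K : Set G) := by
      intro d hd
      rcases Set.mem_image2.mp hd with ⟨a, ⟨e, rfl⟩, b, ⟨f, rfl⟩, rfl⟩
      show |t (P e) (Q f)| ⊓ g = 0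
      rw [ht.abs_tensor]
      exact hdisj e f
    have hsub : closure (latticeSpan D) ⊆ (K : Set G) := by
      refine closure_minimal ?_ hKclosed
      intro z hz
      exact hz K hDK hKsup
    have hmem : S g ∈ (K : Set G) := by
      have h1 : S g ∈ Set.range S := ⟨g, rfl⟩
      rw [hrange] at h1
      exact hsub h1
    have h1 : |S g| ⊓ g = 0 := hmem
    have h2 : 0 ≤ S g := hS.pos g hg
    have h3 : S g ≤ g := hS.proj_le g hg
    rw [abs_of_nonneg h2] at h1
    calc S g = S g ⊓ g := (inf_eq_left.mpr h3).symm
      _ = 0 := h1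
  -- main statement for nonnegative x, y
  have key : ∀ (x : E) (y : F), 0 ≤ x → 0 ≤ y → S (t x y) = t (P x) (Q y) := by
    intro x y hx hy
    have hPx : 0 ≤ P x := hP.pos x hx
    have hQy : 0 ≤ Q y := hQ.pos y hy
    have hx' : 0 ≤ x - P x := sub_nonneg.mpr (hP.proj_le x hx)
    have hy' : 0 ≤ y - Q y := sub_nonneg.mpr (hQ.proj_le y hy)
    -- S fixes the generator t (P x) (Q y)
    have hu : S (t (P x) (Q y)) = t (P x) (Q y) := by
      have hmem : t (P x) (Q y) ∈ Set.range S := by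
        rw [hrange]
        refine subset_closure (fun p hp _ => hp ?_)
        exact Set.mem_image2.mpr ⟨P x, ⟨x, rfl⟩, Q y, ⟨y, rfl⟩, rfl⟩
      obtain ⟨w, hw⟩ := hmem
      rw [← hw]
      exact hS.idem w
    -- S kills t (x - P x) y
    have hC : S (t (x - P x) y) = 0 := by
      refine kill _ (aux_tpos ht hx' hy) ?_
      intro e f
      have hd : |P e| ⊓ (x - P x) = 0 := by
        have h1 := aux_bp_disj hP e x
        rwa [abs_of_nonneg hx'] at h1
      refine le_antisymm ?_
        (le_inf (aux_tpos ht (abs_nonneg _) (abs_nonneg _)) (aux_tpos ht hx' hy))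
      calc t |P e| |Q f| ⊓ t (x - P x) y ≤ t (|P e| ⊓ (x - P x)) (|Q f| ⊔ y) :=
          ht.inf_tensor_le _ _ _ _ (abs_nonneg _) hx' (abs_nonneg _) hy
        _ = 0 := by rw [hd, map_zero, LinearMap.zero_apply]
    -- S kills t (P x) (y - Q y)
    have hDk : S (t (P x) (y - Q y)) = 0 := by
      refine kill _ (aux_tpos ht hPx hy') ?_
      intro e f
      have hd : |Q f| ⊓ (y - Q y) = 0 := by
        have h1 := aux_bp_disj hQ f y
        rwa [abs_of_nonneg hy'] at h1
      exact aux_tensor_disj₂ ht (abs_nonneg (P e)) hPx (abs_nonneg (Q f)) hy' hd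
    -- combine
    have hsplit : t x y = t (P x) (Q y) + t (P x) (y - Q y) + t (x - P x) y := by
      have e1 : P x + (x - P x) = x := by abel
      have e2 : Q y + (y - Q y) = y := by abel
      calc t x y = t (P x + (x - P x)) y := by rw [e1]
        _ = t (P x) y + t (x - P x) y := by rw [map_add, LinearMap.add_apply]
        _ = t (P x) (Q y + (y - Q y)) + t (x - P x) y := by rw [e2]
        _ = t (P x) (Q y) + t (P x) (y - Q y) + t (x - P x) y := by rw [map_add]
    rw [hsplit, map_add, map_add, hu, hC, hDk, add_zero, add_zero]
  -- extend by bilinearity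
  intro x y
  have ex := posPart_sub_negPart x
  have ey := posPart_sub_negPart y
  have h1 : t x y = t x⁺ y⁺ - t x⁺ y⁻ - t x⁻ y⁺ + t x⁻ y⁻ := by
    conv_lhs => rw [← ex, ← ey]
    simp only [map_sub, LinearMap.sub_apply]
    abel
  have h2 : t (P x) (Q y)
      = t (P x⁺) (Q y⁺) - t (P x⁺) (Q y⁻) - t (P x⁻) (Q y⁺) + t (P x⁻) (Q y⁻) := by
    conv_lhs => rw [← ex, ← ey]
    simp only [map_sub, LinearMap.sub_apply]
    abel
  rw [h1, h2, map_add, map_sub, map_sub,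
    key _ _ (posPart_nonneg x) (posPart_nonneg y),
    key _ _ (posPart_nonneg x) (negPart_nonneg y),
    key _ _ (negPart_nonneg x) (posPart_nonneg y),
    key _ _ (negPart_nonneg x) (negPart_nonneg y)]
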